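/- For each d ∈ ℤ/tℤ define the vector ψ_d ∈ ℂ^t by (ψ_d)_x = exp(-πi(x-d)²/t) for x ∈ ℤ/tℤ. Then for all d, d' ∈ ℤ/tℤ, the inner product ⟨ψ_{d'}, ψ_d⟩ equals t if d = d' and 0 otherwise; in particular {ψ_d/√t}_{d ∈ ℤ/tℤ} is an orthonormal basis of ℂ^t. -/

import Mathlib

open Complex Real

theorem sum_zmod_pow_aux (t : ℕ) [NeZero t] (z : ℂ) :
    ∑ x : ZMod t, z ^ (x.val) = ∑ a ∈ Finset.range t, z ^ a := by
  rw [Finset.sum_nbij' (i := fun (x : ZMod t) => x.val) (j := fun a => (a : ZMod t))]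
  · intro x _; exact Finset.mem_range.mpr (ZMod.val_lt x)
  · intros; exact Finset.mem_univ _
  · intro x _; exact ZMod.natCast_zmod_val x
  · intro a ha; exact ZMod.val_natCast_of_lt (Finset.mem_range.mp ha)
  · intros; rfl

theorem exp_calc_aux (t a b b' : ℕ) (ht0 : (t : ℂ) ≠ 0) :
    (starRingEnd ℂ) (Complex.exp (-(π : ℂ) * Complex.I * ((a : ℂ) - (b' : ℂ)) ^ 2 / (t : ℂ))) *
      Complex.exp (-(π : ℂ) * Complex.I * ((a : ℂ) - (b : ℂ)) ^ 2 / (t : ℂ)) =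
    Complex.exp ((π : ℂ) * Complex.I * ((b' : ℂ) ^ 2 - (b : ℂ) ^ 2) / t) *
      (Complex.exp (2 * π * Complex.I * ((b : ℂ) - (b' : ℂ)) / t)) ^ a := by
  rw [← Complex.exp_conj, ← Complex.exp_nat_mul, ← Complex.exp_add, ← Complex.exp_add]
  congr 1
  simp only [map_div₀, map_mul, map_neg, map_pow, map_sub, Complex.conj_I,
    Complex.conj_natCast, Complex.conj_ofReal]
  field_simp
  ring

/-- The vector `ψ_d ∈ ℂ^t`, `(ψ_d)_x = exp(-πi(x-d)²/t)`, with `x, d` represented by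
their standard representatives in `{0, …, t-1}`. -/
noncomputable def psiVec (t : ℕ) [NeZero t] (d : ZMod t) : EuclideanSpace ℂ (ZMod t) :=
  WithLp.toLp 2 (fun x : ZMod t => Complex.exp (-(π : ℂ) * Complex.I * ((x.val : ℂ) - (d.val : ℂ)) ^ 2 / (t : ℂ)))

theorem psiVec_inner_key (t : ℕ) [NeZero t] (d d' : ZMod t) :
    (inner ℂ (psiVec t d') (psiVec t d) : ℂ) = if d = d' then (t : ℂ) else 0 := by
  have ht0 : (t : ℂ) ≠ 0 := Nat.cast_ne_zero.mpr (NeZero.ne t)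
  obtain ⟨b, hbt, rfl⟩ : ∃ b : ℕ, b < t ∧ (b : ZMod t) = d :=
    ⟨d.val, ZMod.val_lt d, ZMod.natCast_zmod_val d⟩
  obtain ⟨b', hbt', rfl⟩ : ∃ b' : ℕ, b' < t ∧ (b' : ZMod t) = d' :=
    ⟨d'.val, ZMod.val_lt d', ZMod.natCast_zmod_val d'⟩
  have hvb : ((b : ZMod t)).val = b := ZMod.val_natCast_of_lt hbt
  have hvb' : ((b' : ZMod t)).val = b' := ZMod.val_natCast_of_lt hbt'
  set z : ℂ := Complex.exp (2 * π * Complex.I * ((b : ℂ) - (b' : ℂ)) / t) with hz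
  rw [show (inner ℂ (psiVec t (b' : ZMod t)) (psiVec t (b : ZMod t)) : ℂ)
        = ∑ x : ZMod t, (starRingEnd ℂ) (psiVec t (b' : ZMod t) x) * psiVec t (b : ZMod t) x from by
      simp [PiLp.inner_apply, RCLike.inner_apply]
      exact Finset.sum_congr rfl fun _ _ => mul_comm _ _]
  have hterm : ∀ x : ZMod t,
      (starRingEnd ℂ) (psiVec t (b' : ZMod t) x) * psiVec t (b : ZMod t) x =
        Complex.exp ((π : ℂ) * Complex.I * ((b' : ℂ) ^ 2 - (b : ℂ) ^ 2) / t) * z ^ (x.val) := by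
    intro x
    rw [psiVec, psiVec, hvb, hvb', hz]
    exact exp_calc_aux t x.val b b' ht0
  simp only [hterm]
  rw [← Finset.mul_sum, sum_zmod_pow_aux]
  by_cases h : (b : ZMod t) = (b' : ZMod t)
  · have : b = b' := by rw [← hvb, ← hvb', h]
    subst this
    simp [hz, sub_self]
  · rw [if_neg h]
    have hbb : b ≠ b' := fun hc => h (by rw [hc])
    set m : ℤ := (b : ℤ) - b' with hm
    have hz1 : z ≠ 1 := by
      intro hc
      rw [hz, Complex.exp_eq_one_iff] at hc
      obtain ⟨n, hn⟩ := hc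
      have h2 : (2 * π * Complex.I : ℂ) ≠ 0 := by
        simp [Real.pi_ne_zero, Complex.I_ne_zero, Complex.ofReal_ne_zero]
      have hcc : ((b : ℂ) - b') = n * t := by
        field_simp at hn ⊢
        apply mul_left_cancel₀ h2
        linear_combination (2 * π * Complex.I) * hn
      have hint : (b : ℤ) - b' = n * t := by exact_mod_cast hcc
      have htpos : (0 : ℤ) < t := by exact_mod_cast Nat.pos_of_ne_zero (NeZero.ne t)
      have h1 : (b : ℤ) < t := by exact_mod_cast hbt
      have h1' : (b' : ℤ) < t := by exact_mod_cast hbt'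
      have hne : (b : ℤ) ≠ b' := fun hc => hbb (by exact_mod_cast hc)
      rcases lt_trichotomy n 0 with hn0 | hn0 | hn0
      · nlinarith [mul_le_mul_of_nonneg_right (by omega : n ≤ -1) htpos.le,
          Int.natCast_nonneg b, Int.natCast_nonneg b']
      · simp [hn0] at hint; omega
      · nlinarith [mul_le_mul_of_nonneg_right (by omega : (1:ℤ) ≤ n) htpos.le,
          Int.natCast_nonneg b, Int.natCast_nonneg b']
    rw [geom_sum_eq hz1]
    have hzt : z ^ t = 1 := by
      rw [hz, ← Complex.exp_nat_mul]
      have heq : (t : ℂ) * (2 * π * Complex.I * ((b : ℂ) - b') / t) =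
          (m : ℂ) * (2 * π * Complex.I) := by
        rw [hm]; push_cast; field_simp
      rw [heq, Complex.exp_int_mul_two_pi_mul_I]
    rw [hzt]
    simp

/-- For all `d, d' ∈ ℤ/tℤ`, `⟨ψ_{d'}, ψ_d⟩ = t` if `d = d'` and `0` otherwise; in
particular `{ψ_d/√t}` is an orthonormal family (hence an orthonormal basis of `ℂ^t`). -/
theorem stmt_4 (t : ℕ) [NeZero t] :
    (∀ d d' : ZMod t,
        (inner ℂ (psiVec t d') (psiVec t d) : ℂ) = if d = d' then (t : ℂ) else 0) ∧
      Orthonormal ℂ (fun d : ZMod t => ((Real.sqrt t : ℂ))⁻¹ • psiVec t d) := by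
  have ht0 : (t : ℝ) ≠ 0 := Nat.cast_ne_zero.mpr (NeZero.ne t)
  refine ⟨psiVec_inner_key t, ?_⟩
  rw [orthonormal_iff_ite]
  intro i j
  rw [inner_smul_left, inner_smul_right, psiVec_inner_key t j i]
  have hsq : ((Real.sqrt t : ℂ)) * ((Real.sqrt t : ℂ)) = (t : ℂ) := by
    rw [← Complex.ofReal_mul, Real.mul_self_sqrt (Nat.cast_nonneg t)]
    norm_num
  have hs0 : ((Real.sqrt t : ℂ)) ≠ 0 := by
    simp only [ne_eq, Complex.ofReal_eq_zero]
    exact Real.sqrt_ne_zero'.mpr (by positivity)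
  by_cases h : i = j
  · subst h
    simp only [if_pos rfl]
    rw [map_inv₀, Complex.conj_ofReal]
    field_simp
    simp only [↓reduceIte]
    linear_combination -hsq
  · rw [if_neg h, if_neg fun hc => h hc.symm]
    simp
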